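/- Let d ≥ 1 be an integer, p ∈ (0,1) with pd not an integer, α ∈ (0,1), and suppose (p − (1−α))·d/α < 0, i.e. p < 1−α. Then, over the family of ray densities r_{j1,j2} (integers 0 ≤ j1 < pd < j2 ≤ d), the minimum of VaR_α(r_{j1,j2}) equals 0 and the maximum of VaR_α(r_{j1,j2}) equals the largest integer strictly smaller than pd/(1−α). -/

import Mathlib

open Finset

/-- Value-at-Risk at level `α` of a pmf `f` on `{0,…,d}`:
`VaR_α(f) = min {y ∈ {0,…,d} : ∑_{j=0}^y f(j) ≥ α}`. -/
noncomputable def VaR (d : ℕ) (α : ℝ) (f : ℕ → ℝ) : ℕ :=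
  sInf {y : ℕ | y ≤ d ∧ α ≤ ∑ j ∈ Finset.range (y + 1), f j}

/-- The ray density `r_{j1,j2}` on `{0,…,d}`: mass `(j2 − pd)/(j2 − j1)` at `j1` and
`(pd − j1)/(j2 − j1)` at `j2`. -/
noncomputable def rayDensity (d : ℕ) (p : ℝ) (j1 j2 : ℕ) : ℕ → ℝ := fun j =>
  if j = j1 then ((j2 : ℝ) - p * d) / ((j2 : ℝ) - (j1 : ℝ))
  else if j = j2 then (p * d - (j1 : ℝ)) / ((j2 : ℝ) - (j1 : ℝ))
  else 0

lemma cum_eq (d : ℕ) (p : ℝ) (j1 j2 : ℕ) (h : j1 < j2) (y : ℕ) :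
    ∑ j ∈ Finset.range (y + 1), rayDensity d p j1 j2 j =
      (if j1 ≤ y then ((j2 : ℝ) - p * d) / ((j2 : ℝ) - (j1 : ℝ)) else 0) +
      (if j2 ≤ y then (p * d - (j1 : ℝ)) / ((j2 : ℝ) - (j1 : ℝ)) else 0) := by
  have key : ∀ j, rayDensity d p j1 j2 j =
      (if j = j1 then ((j2 : ℝ) - p * d) / ((j2 : ℝ) - (j1 : ℝ)) else 0) +
      (if j = j2 then (p * d - (j1 : ℝ)) / ((j2 : ℝ) - (j1 : ℝ)) else 0) := by
    intro j
    by_cases h1 : j = j1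
    · subst h1; simp [rayDensity, h.ne]
    · by_cases h2 : j = j2 <;> simp [rayDensity, h1, h2, h.ne']
  simp only [key, Finset.sum_add_distrib, Finset.sum_ite_eq', Finset.mem_range,
    Nat.lt_succ_iff]

lemma VaR_eq_j1 (d : ℕ) (p α : ℝ) (hα : 0 < α) (j1 j2 : ℕ) (h : j1 < j2) (hj1d : j1 ≤ d)
    (hA : α ≤ ((j2 : ℝ) - p * d) / ((j2 : ℝ) - (j1 : ℝ))) :
    VaR d α (rayDensity d p j1 j2) = j1 := by
  have hmem : j1 ∈ {y : ℕ | y ≤ d ∧ α ≤ ∑ j ∈ Finset.range (y + 1), rayDensity d p j1 j2 j} := by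
    refine ⟨hj1d, ?_⟩
    rw [cum_eq d p j1 j2 h]
    simp [Nat.not_le.2 h, hA]
  refine le_antisymm (Nat.sInf_le hmem) (le_csInf ⟨j1, hmem⟩ ?_)
  intro y hy
  by_contra hlt
  push_neg at hlt
  have hy2 := hy.2
  rw [cum_eq d p j1 j2 h] at hy2
  have h1 : ¬ j1 ≤ y := by omega
  have h2 : ¬ j2 ≤ y := by omega
  simp [h1, h2] at hy2
  linarith

lemma VaR_eq_j2 (d : ℕ) (p α : ℝ) (hα : 0 < α) (hα1 : α ≤ 1) (j1 j2 : ℕ) (h : j1 < j2)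
    (hj2d : j2 ≤ d)
    (hA : ((j2 : ℝ) - p * d) / ((j2 : ℝ) - (j1 : ℝ)) < α) :
    VaR d α (rayDensity d p j1 j2) = j2 := by
  have hne : ((j2 : ℝ) - (j1 : ℝ)) ≠ 0 := by
    have : (j1 : ℝ) < j2 := by exact_mod_cast h
    linarith
  have hsum : ((j2 : ℝ) - p * d) / ((j2 : ℝ) - (j1 : ℝ)) +
      (p * d - (j1 : ℝ)) / ((j2 : ℝ) - (j1 : ℝ)) = 1 := by
    field_simp
    ring
  have hmem : j2 ∈ {y : ℕ | y ≤ d ∧ α ≤ ∑ j ∈ Finset.range (y + 1), rayDensity d p j1 j2 j} := by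
    refine ⟨hj2d, ?_⟩
    rw [cum_eq d p j1 j2 h]
    simp only [h.le, le_refl, if_true]
    linarith
  refine le_antisymm (Nat.sInf_le hmem) (le_csInf ⟨j2, hmem⟩ ?_)
  intro y hy
  by_contra hlt
  push_neg at hlt
  have hy2 := hy.2
  rw [cum_eq d p j1 j2 h] at hy2
  have h2 : ¬ j2 ≤ y := by omega
  by_cases h1 : j1 ≤ y <;> simp [h1, h2] at hy2 <;> linarith

/-- If `pd` is not an integer and `(p − (1−α))d/α < 0`, then over the ray
densities `r_{j1,j2}` (`0 ≤ j1 < pd < j2 ≤ d`) the minimum of `VaR_α` is `0` and the maximum is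
the largest integer strictly smaller than `pd/(1−α)`. -/
theorem stmt_15 (d : ℕ) (hd : 1 ≤ d) (p : ℝ) (hp : p ∈ Set.Ioo (0 : ℝ) 1)
    (hnotint : ¬ ∃ k : ℕ, (k : ℝ) = p * d)
    (α : ℝ) (hα : α ∈ Set.Ioo (0 : ℝ) 1)
    (hneg : (p - (1 - α)) * d / α < 0)
    (S : Set ℕ)
    (hS : S = {v : ℕ | ∃ j1 j2 : ℕ, (j1 : ℝ) < p * d ∧ p * d < (j2 : ℝ) ∧ j2 ≤ d ∧
      v = VaR d α (rayDensity d p j1 j2)}) :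
    IsLeast S 0 ∧
      ∀ j2star : ℕ,
        ((j2star : ℝ) < p * d / (1 - α) ∧ ∀ m : ℕ, (m : ℝ) < p * d / (1 - α) → m ≤ j2star) →
        IsGreatest S j2star := by
  obtain ⟨hp0, hp1⟩ := hp
  obtain ⟨hα0, hα1⟩ := hα
  have hd0 : (0 : ℝ) < d := by exact_mod_cast Nat.lt_of_lt_of_le Nat.zero_lt_one hd
  have h1α : (0 : ℝ) < 1 - α := by linarith
  -- p < 1 - α
  have hplt : p < 1 - α := by
    have h1 : (p - (1 - α)) * d < 0 := by
      by_contra hc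
      push_neg at hc
      have := div_nonneg hc hα0.le
      linarith
    nlinarith
  have hpd0 : (0 : ℝ) < p * d := mul_pos hp0 hd0
  have hpdd : p * d < (1 - α) * d := by nlinarith
  have hfrac : p * d / (1 - α) < d := by
    rw [div_lt_iff₀ h1α]; nlinarith
  constructor
  · -- IsLeast S 0
    constructor
    · rw [hS]
      refine ⟨0, d, ?_, ?_, le_refl d, ?_⟩
      · simpa using hpd0
      · nlinarith
      · rw [VaR_eq_j1 d p α hα0 0 d (by omega) (Nat.zero_le d)]
        push_cast
        rw [le_div_iff₀ (by linarith)]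
        nlinarith
    · intro v _; exact Nat.zero_le v
  · intro j2star ⟨hjs1, hjs2⟩
    have hjsd : (j2star : ℝ) < d := lt_trans hjs1 hfrac
    have hjsdn : j2star < d := by exact_mod_cast hjsd
    constructor
    · -- membership
      rw [hS]
      rcases lt_or_gt_of_ne (fun h : (j2star : ℝ) = p * d => hnotint ⟨j2star, h⟩) with hlt | hgt
      · -- j2star < pd : take j1 = j2star, j2 = d
        refine ⟨j2star, d, hlt, by nlinarith, le_refl d, ?_⟩
        rw [VaR_eq_j1 d p α hα0 j2star d hjsdn hjsdn.le]
        rw [le_div_iff₀ (by push_cast; linarith)]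
        have hjs0 : (0 : ℝ) ≤ j2star := Nat.cast_nonneg _
        nlinarith
      · -- pd < j2star : take j1 = 0, j2 = j2star
        have hjs0 : 0 < j2star := by
          by_contra hc
          push_neg at hc
          interval_cases j2star
          simp at hgt
          linarith
        refine ⟨0, j2star, by simpa using hpd0, hgt, hjsdn.le, ?_⟩
        rw [VaR_eq_j2 d p α hα0 hα1.le 0 j2star hjs0 hjsdn.le]
        push_cast
        rw [div_lt_iff₀ (by linarith [hgt])]
        have := (lt_div_iff₀ h1α).1 hjs1
        nlinarith
    · -- upper bound
      intro v hv
      rw [hS] at hv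
      obtain ⟨j1, j2, hj1, hj2, hj2d, hveq⟩ := hv
      have hj12 : j1 < j2 := by
        have : (j1 : ℝ) < j2 := lt_trans hj1 hj2
        exact_mod_cast this
      have hj12R : (j1 : ℝ) < j2 := by exact_mod_cast hj12
      have hj1d : j1 ≤ d := by omega
      rcases le_or_gt α (((j2 : ℝ) - p * d) / ((j2 : ℝ) - (j1 : ℝ))) with hA | hA
      · rw [hveq, VaR_eq_j1 d p α hα0 j1 j2 hj12 hj1d hA]
        apply hjs2
        calc (j1 : ℝ) < p * d := hj1
          _ ≤ p * d / (1 - α) := by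
              rw [le_div_iff₀ h1α]; nlinarith
      · rw [hveq, VaR_eq_j2 d p α hα0 hα1.le j1 j2 hj12 hj2d hA]
        apply hjs2
        rw [lt_div_iff₀ h1α]
        rw [div_lt_iff₀ (by linarith)] at hA
        have hj10 : (0 : ℝ) ≤ j1 := Nat.cast_nonneg _
        nlinarith
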